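/- Let λ ∈ ℂ and set Λ = max{1, |λ|}. There exist constants C > 0 and ρ₀ > 0 (depending only on λ) such that for every ρ ≥ ρ₀ and all natural numbers n, k with |n − 2√Λ·ρ| ≤ 1 and |k − 12√Λ·√ρ| ≤ 1, the following holds. Set d = (ρ + 3√ρ)^{4k}·μ_{n−2k}(ρ + 3√ρ)/μ_{n+2k}(ρ + 3√ρ) and define g(r) = d·r^{−4k}·μ_{n+2k}(r)/μ_{n−2k}(r). Then e^{−C} ≤ |g(r)| ≤ 1 for all r ∈ [ρ + 3√ρ, ρ + 4√ρ]. -/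

import Mathlib

noncomputable section

/-- `μ_n(r) = exp(n·[Log(√(1 − λr²/n²) + 1) − √(1 − λr²/n²) − Log 2 + 1])`,
where `Log` and `√` (i.e. `cpow (1/2)`) are the principal branches. -/
def mu (lam : ℂ) (n : ℕ) (r : ℝ) : ℂ :=
  Complex.exp ((n : ℂ) *
    (Complex.log ((1 - lam * (r : ℂ) ^ 2 / (n : ℂ) ^ 2) ^ ((1 : ℂ) / 2) + 1)
      - (1 - lam * (r : ℂ) ^ 2 / (n : ℂ) ^ 2) ^ ((1 : ℂ) / 2)
      - Complex.log 2 + 1))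

set_option maxHeartbeats 3000000
open Complex
def zz (lam : ℂ) (m : ℕ) (x : ℝ) : ℂ := 1 - lam * (x:ℂ)^2 / (m:ℂ)^2
def ww (lam : ℂ) (m : ℕ) (x : ℝ) : ℂ := zz lam m x ^ ((1:ℂ)/2)
def muE (lam : ℂ) (m : ℕ) (x : ℝ) : ℂ :=
  (m:ℂ) * (Complex.log (ww lam m x + 1) - ww lam m x - Complex.log 2 + 1)

lemma mu_eq (lam : ℂ) (m : ℕ) (x : ℝ) : mu lam m x = Complex.exp (muE lam m x) := rfl

lemma zre_ge (lam : ℂ) (m : ℕ) (x : ℝ) (hm : (0:ℝ) < m)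
    (hsmall : ‖lam‖ * x^2 ≤ (27/100)*(m:ℝ)^2) :
    (73/100:ℝ) ≤ (zz lam m x).re := by
  have habs : ‖lam * (x:ℂ)^2 / (m:ℂ)^2‖ ≤ 27/100 := by
    rw [norm_div, norm_mul, norm_pow, norm_pow, Complex.norm_real, Real.norm_eq_abs, Complex.norm_natCast]
    rw [div_le_iff₀ (by positivity)]
    calc ‖lam‖ * |x|^2 ≤ (27/100)*(m:ℝ)^2 := by
          rw [_root_.sq_abs]; exact hsmall
      _ = 27/100 * (m:ℝ)^2 := rfl
  have := neg_abs_le (lam * (x:ℂ)^2 / (m:ℂ)^2).re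
  have h2 := (Complex.abs_re_le_norm (lam * (x:ℂ)^2 / (m:ℂ)^2)).trans habs
  simp only [zz, Complex.sub_re, Complex.one_re]
  have := abs_le.mp ((Complex.abs_re_le_norm _).trans habs)
  linarith [this.2]

lemma wre_nonneg {z : ℂ} (hz : z ≠ 0) : 0 ≤ (z ^ ((1:ℂ)/2)).re := by
  rw [Complex.cpow_def_of_ne_zero hz, Complex.exp_re]
  have him : (Complex.log z * (1/2)).im = z.arg / 2 := by
    simp [Complex.mul_im, Complex.log_im, Complex.log_re]; ring
  rw [him]
  have h1 := Complex.neg_pi_lt_arg z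
  have h2 := Complex.arg_le_pi z
  have : 0 ≤ Real.cos (z.arg / 2) := by
    apply Real.cos_nonneg_of_mem_Icc
    constructor <;> [linarith; linarith]
  positivity

lemma wsq {z : ℂ} (hz : z ≠ 0) : (z ^ ((1:ℂ)/2))^2 = z := by
  rw [sq, ← Complex.cpow_add _ _ hz]
  norm_num

lemma wre_ge (lam : ℂ) (m : ℕ) (x : ℝ) (hz : zz lam m x ≠ 0)
    (hzre : (73/100:ℝ) ≤ (zz lam m x).re) : (85/100:ℝ) ≤ (ww lam m x).re := by
  have h0 : 0 ≤ (ww lam m x).re := wre_nonneg hz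
  have hsq : (ww lam m x)^2 = zz lam m x := wsq hz
  have hre : (ww lam m x).re^2 - (ww lam m x).im^2 = (zz lam m x).re := by
    rw [← hsq]; simp [sq, Complex.mul_re]
  nlinarith [sq_nonneg ((ww lam m x).im)]

lemma muE_hasDeriv (lam : ℂ) (m : ℕ) (x : ℝ) (hm : 0 < m)
    (hzre : (73/100:ℝ) ≤ (zz lam m x).re) (hwre : (85/100:ℝ) ≤ (ww lam m x).re) :
    HasDerivAt (fun y : ℝ => muE lam m y)
      (lam * (x:ℂ) / ((m:ℂ) * (ww lam m x + 1))) x := by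
  have hmC : (m:ℂ) ≠ 0 := Nat.cast_ne_zero.mpr hm.ne'
  have hz_ne : zz lam m x ≠ 0 := by
    intro h; rw [h] at hzre; norm_num at hzre
  have hslit : zz lam m x ∈ Complex.slitPlane :=
    Complex.mem_slitPlane_iff.mpr (Or.inl (by linarith))
  have hw1 : ww lam m x + 1 ∈ Complex.slitPlane := by
    apply Complex.mem_slitPlane_iff.mpr (Or.inl ?_)
    simp only [Complex.add_re, Complex.one_re]; linarith
  have hw1ne : ww lam m x + 1 ≠ 0 := Complex.slitPlane_ne_zero hw1
  -- complex-variable functions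
  set Z : ℂ → ℂ := fun ζ => 1 - lam * ζ^2 / (m:ℂ)^2 with hZ
  have hZx : Z (x:ℂ) = zz lam m x := rfl
  have hWx : Z (x:ℂ) ^ ((1:ℂ)/2) = ww lam m x := rfl
  have hzd : HasDerivAt Z (-(2 * lam * (x:ℂ) / (m:ℂ)^2)) (x:ℂ) := by
    have : HasDerivAt Z (-(lam * (2 * (x:ℂ)^1 * 1) / (m:ℂ)^2)) (x:ℂ) :=
      ((((hasDerivAt_id ((x:ℂ))).pow 2).const_mul lam).div_const ((m:ℂ)^2)).const_sub 1
    convert this using 1; ring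
  set W' : ℂ := (1:ℂ)/2 * zz lam m x ^ ((1:ℂ)/2 - 1) * (-(2 * lam * (x:ℂ) / (m:ℂ)^2)) with hW'
  have hwd : HasDerivAt (fun ζ : ℂ => Z ζ ^ ((1:ℂ)/2)) W' (x:ℂ) := by
    have := HasDerivAt.cpow_const (c := (1:ℂ)/2) hzd (hZx ▸ hslit)
    rw [hW']; rw [hZx] at this; exact this
  have hlogd : HasDerivAt (fun ζ : ℂ => Complex.log (Z ζ ^ ((1:ℂ)/2) + 1))
      (W' / (ww lam m x + 1)) (x:ℂ) := by
    have := HasDerivAt.clog (hwd.add_const 1) (by rw [hWx]; exact hw1)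
    rw [hWx] at this; exact this
  have hEDC : HasDerivAt (fun ζ : ℂ => (m:ℂ) * (Complex.log (Z ζ ^ ((1:ℂ)/2) + 1)
        - Z ζ ^ ((1:ℂ)/2) - Complex.log 2 + 1))
      ((m:ℂ) * (W' / (ww lam m x + 1) - W')) (x:ℂ) :=
    (((hlogd.sub hwd).sub_const (Complex.log 2)).add_const 1).const_mul (m:ℂ)
  have hED : HasDerivAt (fun y : ℝ => muE lam m y)
      ((m:ℂ) * (W' / (ww lam m x + 1) - W')) x := hEDC.comp_ofReal
  convert hED using 1
  have hone : zz lam m x ^ ((1:ℂ)/2 - 1) * ww lam m x = 1 := by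
    unfold ww
    rw [← Complex.cpow_add _ _ hz_ne]
    norm_num
  have hwne : ww lam m x ≠ 0 := by
    intro h; rw [h, mul_zero] at hone; exact one_ne_zero hone.symm
  have h2 : W' * ww lam m x = -(lam * (x:ℂ) / (m:ℂ)^2) := by
    rw [hW']
    linear_combination (-(lam * (x:ℂ) / (m:ℂ)^2)) * hone
  have hW2 : W' = -(lam * (x:ℂ) / (m:ℂ)^2) / ww lam m x := by
    rw [eq_div_iff hwne]; exact h2
  rw [hW2, div_eq_iff (mul_ne_zero hmC hw1ne)]
  field_simp
  ring

lemma mfacts (lam : ℂ) (m : ℕ) (x : ℝ) (hx : 0 < x) (hm : 0 < m)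
    (hsmall : ‖lam‖ * x^2 ≤ (27/100)*(m:ℝ)^2) :
    (85/100:ℝ) ≤ (ww lam m x).re ∧
    ((m:ℂ) * ww lam m x)^2 = (m:ℂ)^2 - lam*(x:ℂ)^2 ∧
    HasDerivAt (fun y : ℝ => (muE lam m y).re)
      ((lam*(x:ℂ)/((m:ℂ)*(ww lam m x+1))).re) x := by
  have hmR : (0:ℝ) < m := by exact_mod_cast hm
  have hzre := zre_ge lam m x hmR hsmall
  have hz_ne : zz lam m x ≠ 0 := by
    intro h; rw [h] at hzre; norm_num at hzre
  have hwre := wre_ge lam m x hz_ne hzre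
  have hmC : (m:ℂ) ≠ 0 := Nat.cast_ne_zero.mpr hm.ne'
  refine ⟨hwre, ?_, ?_⟩
  · rw [mul_pow]
    unfold ww
    rw [wsq hz_ne]
    unfold zz
    field_simp
  · exact Complex.reCLM.hasFDerivAt.comp_hasDerivAt x (muE_hasDeriv lam m x hm hzre hwre)

def Gfun (lam : ℂ) (Mm Mp k : ℕ) : ℝ → ℝ :=
  fun y => (muE lam Mp y).re - (muE lam Mm y).re - 4*(k:ℝ)*Real.log y

def Gd (lam : ℂ) (Mm Mp k : ℕ) : ℝ → ℝ :=
  fun y => ((lam*(y:ℂ)/((Mp:ℂ)*(ww lam Mp y+1))).re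
    - (lam*(y:ℂ)/((Mm:ℂ)*(ww lam Mm y+1))).re) - 4*(k:ℝ)/y

lemma Gmain (lam : ℂ) (L ρ x : ℝ) (n k Mm Mp : ℕ)
    (hL : 1 ≤ L) (hlam : ‖lam‖ ≤ L^2)
    (hMm : (197/100)*L*ρ ≤ (Mm:ℝ)) (hMp : (Mp:ℝ) ≤ (203/100)*L*ρ)
    (hMsum : (Mm:ℝ) + (Mp:ℝ) = 2*(n:ℝ)) (hMdiff : (Mp:ℝ) - (Mm:ℝ) = 4*(k:ℝ))
    (hρ : (0:ℝ) < ρ)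
    (hx : ρ ≤ x) (hx2 : x ≤ (251/250)*ρ) :
    HasDerivAt (Gfun lam Mm Mp k) (Gd lam Mm Mp k x) x ∧
    Gd lam Mm Mp k x ≤ 0 ∧ |Gd lam Mm Mp k x| ≤ 7*(k:ℝ)/ρ := by
  have hLρ : (0:ℝ) < L*ρ := by positivity
  have hxpos : (0:ℝ) < x := lt_of_lt_of_le hρ hx
  have hMmpos : (0:ℝ) < (Mm:ℝ) := lt_of_lt_of_le (by nlinarith) hMm
  have hMppos : (0:ℝ) < (Mp:ℝ) := by nlinarith
  have hMm0 : 0 < Mm := by exact_mod_cast hMmpos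
  have hMp0 : 0 < Mp := by exact_mod_cast hMppos
  have hMple : (Mm:ℝ) ≤ (Mp:ℝ) := by nlinarith
  -- smallness
  have habs2 : ‖lam‖ * x^2 ≤ L^2 * ((251/250)*ρ)^2 := by
    have h1 : x^2 ≤ ((251/250)*ρ)^2 := by nlinarith
    have := norm_nonneg lam
    nlinarith
  have hsmall : ∀ m : ℕ, (197/100)*L*ρ ≤ (m:ℝ) →
      ‖lam‖ * x^2 ≤ (27/100)*(m:ℝ)^2 := by
    intro m hm
    have h2 : ((197/100)*L*ρ)^2 ≤ (m:ℝ)^2 := by nlinarith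
    nlinarith
  obtain ⟨hwm, hsqm, hdm⟩ := mfacts lam Mm x hxpos hMm0 (hsmall Mm hMm)
  obtain ⟨hwp, hsqp, hdp⟩ := mfacts lam Mp x hxpos hMp0 (hsmall Mp (le_trans hMm hMple))
  set wm := ww lam Mm x
  set wp := ww lam Mp x
  have hwm1 : wm + 1 ≠ 0 := by
    intro h
    have : (wm + 1).re = 0 := by rw [h]; simp
    simp only [Complex.add_re, Complex.one_re] at this; linarith
  have hwp1 : wp + 1 ≠ 0 := by
    intro h
    have : (wp + 1).re = 0 := by rw [h]; simp
    simp only [Complex.add_re, Complex.one_re] at this; linarith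
  have hMmC : (Mm:ℂ) ≠ 0 := Nat.cast_ne_zero.mpr hMm0.ne'
  have hMpC : (Mp:ℂ) ≠ 0 := Nat.cast_ne_zero.mpr hMp0.ne'
  -- a, b
  set a : ℂ := (Mm:ℂ) * wm
  set b : ℂ := (Mp:ℂ) * wp
  have hab_re : (17/20)*((Mm:ℝ)+(Mp:ℝ)) ≤ (a+b).re := by
    have : (a+b).re = (Mm:ℝ)*wm.re + (Mp:ℝ)*wp.re := by
      simp [a, b, Complex.add_re, Complex.mul_re]
    rw [this]
    nlinarith
  have habpos : (0:ℝ) < (a+b).re := by nlinarith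
  have hab_ne : a + b ≠ 0 := fun h => by rw [h] at habpos; simp at habpos
  have hab_abs : (17/20)*((Mm:ℝ)+(Mp:ℝ)) ≤ ‖a+b‖ :=
    le_trans hab_re (Complex.re_le_norm _)
  -- a - b
  have hdiffsq : a^2 - b^2 = (Mm:ℂ)^2 - (Mp:ℂ)^2 := by
    rw [hsqm, hsqp]; ring
  have hamb : a - b = ((Mm:ℂ)^2 - (Mp:ℂ)^2)/(a+b) := by
    rw [eq_div_iff hab_ne]; linear_combination hdiffsq
  have hamb_abs : ‖a - b‖ ≤ (80/17)*(k:ℝ) := by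
    rw [hamb, norm_div]
    have hnum : ‖(Mm:ℂ)^2 - (Mp:ℂ)^2‖ = (Mp:ℝ)^2 - (Mm:ℝ)^2 := by
      have : (Mm:ℂ)^2 - (Mp:ℂ)^2 = (((Mm:ℝ)^2 - (Mp:ℝ)^2 : ℝ) : ℂ) := by
        push_cast; ring
      rw [this, Complex.norm_real, Real.norm_eq_abs, abs_of_nonpos (by nlinarith)]
      ring
    rw [hnum]
    rw [div_le_iff₀ (lt_of_lt_of_le (by nlinarith) hab_abs)]
    have h8 : (Mp:ℝ)^2 - (Mm:ℝ)^2 = 4*(k:ℝ)*((Mm:ℝ)+(Mp:ℝ)) := by nlinarith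
    have hk0 : (0:ℝ) ≤ (k:ℝ) := Nat.cast_nonneg k
    calc (Mp:ℝ)^2 - (Mm:ℝ)^2 = 4*(k:ℝ)*((Mm:ℝ)+(Mp:ℝ)) := h8
      _ ≤ (80/17)*(k:ℝ)*((17/20)*((Mm:ℝ)+(Mp:ℝ))) := by ring_nf; nlinarith
      _ ≤ (80/17)*(k:ℝ)*‖a+b‖ := by
          apply mul_le_mul_of_nonneg_left hab_abs (by positivity)
  -- N
  set N : ℂ := (Mm:ℂ)*(wm+1) - (Mp:ℂ)*(wp+1)
  have hN : N = (a - b) + ((Mm:ℂ) - (Mp:ℂ)) := by simp only [N, a, b]; ring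
  have hNabs : ‖N‖ ≤ (148/17)*(k:ℝ) := by
    rw [hN]
    refine le_trans (norm_add_le _ _) ?_
    have : ‖(Mm:ℂ) - (Mp:ℂ)‖ = 4*(k:ℝ) := by
      have : (Mm:ℂ) - (Mp:ℂ) = (((Mm:ℝ) - (Mp:ℝ) : ℝ) : ℂ) := by push_cast; ring
      rw [this, Complex.norm_real, Real.norm_eq_abs, abs_of_nonpos (by linarith)]
      linarith
    rw [this]
    linarith [hamb_abs]
  -- difference of the two derivative terms
  set Adiff : ℂ := lam*(x:ℂ)/((Mp:ℂ)*(wp+1)) - lam*(x:ℂ)/((Mm:ℂ)*(wm+1))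
  have hAeq : Adiff = lam*(x:ℂ)*N/(((Mp:ℂ)*(wp+1))*((Mm:ℂ)*(wm+1))) := by
    simp only [Adiff, N]
    field_simp
  have habsw1m : (1:ℝ) ≤ ‖wm+1‖ := by
    refine le_trans ?_ (Complex.re_le_norm _)
    simp only [Complex.add_re, Complex.one_re]; linarith
  have habsw1p : (1:ℝ) ≤ ‖wp+1‖ := by
    refine le_trans ?_ (Complex.re_le_norm _)
    simp only [Complex.add_re, Complex.one_re]; linarith
  have hAbound : ‖Adiff‖ ≤ (226/100)*(k:ℝ)/ρ := by
    rw [hAeq, norm_div, norm_mul, norm_mul]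
    rw [Complex.norm_real, Real.norm_eq_abs, abs_of_pos hxpos, norm_mul, norm_mul, norm_mul,
      Complex.norm_natCast, Complex.norm_natCast]
    have hden : (197/100*L*ρ) * 1 * ((197/100*L*ρ) * 1) ≤
        (Mp:ℝ) * ‖wp+1‖ * ((Mm:ℝ) * ‖wm+1‖) := by
      have h1 : (197/100*L*ρ) ≤ (Mp:ℝ) := le_trans hMm hMple
      have hMp1 : (0:ℝ) ≤ (Mp:ℝ) := le_of_lt hMppos
      have := mul_le_mul h1 habsw1p (by norm_num) hMp1
      have h2 := mul_le_mul hMm habsw1m (by norm_num) (le_of_lt hMmpos)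
      calc (197/100*L*ρ) * 1 * ((197/100*L*ρ) * 1)
          ≤ ((Mp:ℝ) * ‖wp+1‖) * ((197/100*L*ρ) * 1) := by nlinarith
        _ ≤ ((Mp:ℝ) * ‖wp+1‖) * ((Mm:ℝ) * ‖wm+1‖) := by nlinarith
    have hdenpos : (0:ℝ) < (197/100*L*ρ) * 1 * ((197/100*L*ρ) * 1) := by positivity
    rw [div_le_iff₀ (lt_of_lt_of_le hdenpos hden)]
    have h1 : ‖lam‖ * x ≤ L^2 * ((251/250)*ρ) :=
      mul_le_mul hlam hx2 (le_of_lt hxpos) (by positivity)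
    have hnum2 : ‖lam‖ * x * ‖N‖ ≤
        L^2 * ((251/250)*ρ) * ((148/17)*(k:ℝ)) :=
      mul_le_mul h1 hNabs (norm_nonneg N) (by positivity)
    calc ‖lam‖ * x * ‖N‖
        ≤ L^2 * ((251/250)*ρ) * ((148/17)*(k:ℝ)) := hnum2
      _ ≤ (226/100)*(k:ℝ)/ρ * ((197/100*L*ρ) * 1 * ((197/100*L*ρ) * 1)) := by
          have hD : (226/100)*(k:ℝ)/ρ * ((197/100*L*ρ) * 1 * ((197/100*L*ρ) * 1))
              = (226/100)*(38809/10000)*(L^2*((k:ℝ)*ρ)) := by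
            field_simp
            ring
          rw [hD]
          have ht : (0:ℝ) ≤ L^2*((k:ℝ)*ρ) := by positivity
          have hE : L^2 * ((251/250)*ρ) * ((148/17)*(k:ℝ)) = (251/250)*(148/17)*(L^2*((k:ℝ)*ρ)) := by ring
          rw [hE]
          linarith only [ht]
      _ ≤ (226/100)*(k:ℝ)/ρ * ((Mp:ℝ) * ‖wp+1‖ * ((Mm:ℝ) * ‖wm+1‖)) := by
          apply mul_le_mul_of_nonneg_left hden (by positivity)
  -- derivative of G
  have hlogd : HasDerivAt (fun y : ℝ => 4*(k:ℝ)*Real.log y) (4*(k:ℝ)/x) x := by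
    have := (Real.hasDerivAt_log hxpos.ne').const_mul (4*(k:ℝ))
    simpa [div_eq_mul_inv] using this
  have hG : HasDerivAt (Gfun lam Mm Mp k) (Gd lam Mm Mp k x) x := by
    have := (hdp.sub hdm).sub hlogd
    have he : Gd lam Mm Mp k x = ((lam*(x:ℂ)/((Mp:ℂ)*(wp+1))).re
        - (lam*(x:ℂ)/((Mm:ℂ)*(wm+1))).re) - 4*(k:ℝ)/x := rfl
    rw [he]
    exact this
  refine ⟨hG, ?_, ?_⟩
  · -- Gd ≤ 0
    have hre : (lam*(x:ℂ)/((Mp:ℂ)*(wp+1))).re - (lam*(x:ℂ)/((Mm:ℂ)*(wm+1))).re = Adiff.re := by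
      simp [Adiff, Complex.sub_re]
    have h1 : Adiff.re ≤ (226/100)*(k:ℝ)/ρ :=
      le_trans (Complex.re_le_norm _) hAbound
    show ((lam*(x:ℂ)/((Mp:ℂ)*(wp+1))).re - (lam*(x:ℂ)/((Mm:ℂ)*(wm+1))).re) - 4*(k:ℝ)/x ≤ 0
    rw [hre]
    clear_value Adiff wm wp a b N
    clear hre hAbound hAeq hG hlogd hN hNabs hamb hamb_abs hdiffsq hsqm hsqp hdm hdp
    have h2 : 4*(k:ℝ)/x ≥ (1000/251)*(k:ℝ)/ρ := by
      rw [ge_iff_le, div_le_div_iff₀ hρ hxpos]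
      nlinarith [mul_nonneg (Nat.cast_nonneg k : (0:ℝ) ≤ (k:ℝ)) (le_of_lt hρ)]
    have hfin : (226/100)*(k:ℝ)/ρ ≤ (1000/251)*(k:ℝ)/ρ := by
      rw [div_le_div_iff₀ hρ hρ]
      nlinarith [mul_nonneg (Nat.cast_nonneg k : (0:ℝ) ≤ (k:ℝ)) (le_of_lt hρ)]
    linarith
  · -- |Gd| ≤ 7k/ρ
    have hre : (lam*(x:ℂ)/((Mp:ℂ)*(wp+1))).re - (lam*(x:ℂ)/((Mm:ℂ)*(wm+1))).re = Adiff.re := by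
      simp [Adiff, Complex.sub_re]
    have hGdeq : Gd lam Mm Mp k x = Adiff.re - 4*(k:ℝ)/x := by
      show ((lam*(x:ℂ)/((Mp:ℂ)*(wp+1))).re - (lam*(x:ℂ)/((Mm:ℂ)*(wm+1))).re) - 4*(k:ℝ)/x
        = Adiff.re - 4*(k:ℝ)/x
      rw [hre]
    rw [hGdeq]
    have h1 : |Adiff.re| ≤ (226/100)*(k:ℝ)/ρ :=
      le_trans (Complex.abs_re_le_norm _) hAbound
    clear_value Adiff wm wp a b N
    clear hre hGdeq hAbound hAeq hG hlogd hN hNabs hamb hamb_abs hdiffsq hsqm hsqp hdm hdp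
    have h2 : |4*(k:ℝ)/x| ≤ 4*(k:ℝ)/ρ := by
      have h0 : (0:ℝ) ≤ 4*(k:ℝ)/x := by positivity
      rw [_root_.abs_of_nonneg h0]
      gcongr
    calc |Adiff.re - 4*(k:ℝ)/x| ≤ |Adiff.re| + |4*(k:ℝ)/x| := abs_sub _ _
      _ ≤ (226/100)*(k:ℝ)/ρ + 4*(k:ℝ)/ρ := add_le_add h1 h2
      _ ≤ 7*(k:ℝ)/ρ := by
          rw [← add_div, div_le_div_iff₀ hρ hρ]
          nlinarith [mul_nonneg (Nat.cast_nonneg k : (0:ℝ) ≤ (k:ℝ)) (le_of_lt hρ)]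

theorem stmt18 (lam : ℂ) :
    ∃ (C ρ₀ : ℝ), 0 < C ∧ 0 < ρ₀ ∧
      ∀ ρ : ℝ, ρ₀ ≤ ρ → ∀ n k : ℕ,
        |(n : ℝ) - 2 * Real.sqrt (max 1 ‖lam‖) * ρ| ≤ 1 →
        |(k : ℝ) - 12 * Real.sqrt (max 1 ‖lam‖) * Real.sqrt ρ| ≤ 1 →
        ∀ r ∈ Set.Icc (ρ + 3 * Real.sqrt ρ) (ρ + 4 * Real.sqrt ρ),
          Real.exp (-C) ≤
            ‖(((ρ + 3 * Real.sqrt ρ : ℝ) : ℂ) ^ (4 * k) *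
                (mu lam (n - 2 * k) (ρ + 3 * Real.sqrt ρ) /
                  mu lam (n + 2 * k) (ρ + 3 * Real.sqrt ρ))) *
              (r : ℂ) ^ (-(4 * k : ℤ)) * (mu lam (n + 2 * k) r / mu lam (n - 2 * k) r)‖ ∧
          ‖(((ρ + 3 * Real.sqrt ρ : ℝ) : ℂ) ^ (4 * k) *
                (mu lam (n - 2 * k) (ρ + 3 * Real.sqrt ρ) /
                  mu lam (n + 2 * k) (ρ + 3 * Real.sqrt ρ))) *
              (r : ℂ) ^ (-(4 * k : ℤ)) * (mu lam (n + 2 * k) r / mu lam (n - 2 * k) r)‖ ≤ 1 := by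
  set L : ℝ := Real.sqrt (max 1 ‖lam‖) with hLdef
  have hL1 : (1:ℝ) ≤ L := by
    rw [hLdef]
    have h := Real.sqrt_le_sqrt (le_max_left 1 (‖lam‖))
    rwa [Real.sqrt_one] at h
  have hlamL : ‖lam‖ ≤ L^2 := by
    rw [hLdef, Real.sq_sqrt (le_trans zero_le_one (le_max_left _ _))]
    exact le_max_right _ _
  refine ⟨100*L, 1000000, by positivity, by norm_num, ?_⟩
  intro ρ hρ n k hn hk r hr
  have hρpos : (0:ℝ) < ρ := lt_of_lt_of_le (by norm_num) hρ
  have hsρ : (1000:ℝ) ≤ Real.sqrt ρ := by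
    rw [show (1000:ℝ) = Real.sqrt 1000000 by
      rw [show (1000000:ℝ) = 1000^2 by norm_num, Real.sqrt_sq (by norm_num)]]
    exact Real.sqrt_le_sqrt hρ
  have hsρpos : (0:ℝ) < Real.sqrt ρ := by linarith
  have hss : Real.sqrt ρ * Real.sqrt ρ = ρ := Real.mul_self_sqrt (le_of_lt hρpos)
  have hsρρ : 1000 * Real.sqrt ρ ≤ ρ := by nlinarith
  have hnb := abs_le.mp hn
  have hkb := abs_le.mp hk
  have hLs : (1000:ℝ) ≤ L * Real.sqrt ρ := by nlinarith
  have hLρ : (1000000:ℝ) ≤ L * ρ := by nlinarith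
  -- 2k < n
  have h2k : 2*k < n := by
    have h1 : (2*k:ℝ) < (n:ℝ) := by push_cast; nlinarith
    exact_mod_cast h1
  set Mm : ℕ := n - 2*k with hMmdef
  set Mp : ℕ := n + 2*k with hMpdef
  have hMmcast : (Mm:ℝ) = (n:ℝ) - 2*(k:ℝ) := by
    rw [hMmdef, Nat.cast_sub (le_of_lt h2k)]; push_cast; ring
  have hMpcast : (Mp:ℝ) = (n:ℝ) + 2*(k:ℝ) := by rw [hMpdef]; push_cast; ring
  have hMm : (197/100)*L*ρ ≤ (Mm:ℝ) := by rw [hMmcast]; nlinarith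
  have hMp : (Mp:ℝ) ≤ (203/100)*L*ρ := by rw [hMpcast]; nlinarith
  have hMsum : (Mm:ℝ) + (Mp:ℝ) = 2*(n:ℝ) := by rw [hMmcast, hMpcast]; ring
  have hMdiff : (Mp:ℝ) - (Mm:ℝ) = 4*(k:ℝ) := by rw [hMmcast, hMpcast]; ring
  set s : ℝ := ρ + 3 * Real.sqrt ρ with hsdef
  set S : Set ℝ := Set.Icc s (ρ + 4 * Real.sqrt ρ) with hSdef
  have hmem : ∀ x ∈ S, ρ ≤ x ∧ x ≤ (251/250)*ρ := by
    intro x hx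
    obtain ⟨h1, h2⟩ := hx
    constructor
    · rw [hsdef] at h1; nlinarith
    · nlinarith
  have hsS : s ∈ S := ⟨le_refl _, by rw [hsdef]; nlinarith⟩
  have hrS : r ∈ S := hr
  have hG : ∀ x ∈ S, HasDerivAt (Gfun lam Mm Mp k) (Gd lam Mm Mp k x) x ∧
      Gd lam Mm Mp k x ≤ 0 ∧ |Gd lam Mm Mp k x| ≤ 7*(k:ℝ)/ρ := by
    intro x hx
    exact Gmain lam L ρ x n k Mm Mp hL1 hlamL hMm hMp hMsum hMdiff hρpos
      (hmem x hx).1 (hmem x hx).2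
  -- antitone
  have hanti : AntitoneOn (Gfun lam Mm Mp k) S := by
    apply antitoneOn_of_deriv_nonpos (convex_Icc _ _)
    · intro x hx
      exact ((hG x hx).1).continuousAt.continuousWithinAt
    · intro x hx
      exact ((hG x (interior_subset hx)).1).differentiableAt.differentiableWithinAt
    · intro x hx
      rw [((hG x (interior_subset hx)).1).deriv]
      exact (hG x (interior_subset hx)).2.1
  -- Lipschitz bound
  have hlip : |Gfun lam Mm Mp k r - Gfun lam Mm Mp k s| ≤ (7*(k:ℝ)/ρ) * |r - s| := by
    have := (convex_Icc s (ρ + 4 * Real.sqrt ρ)).norm_image_sub_le_of_norm_hasDerivWithin_le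
      (f' := fun x => Gd lam Mm Mp k x)
      (fun x hx => ((hG x hx).1).hasDerivWithinAt)
      (fun x hx => by rw [Real.norm_eq_abs]; exact (hG x hx).2.2) hsS hrS
    simpa [Real.norm_eq_abs] using this
  have hGbound : |Gfun lam Mm Mp k r - Gfun lam Mm Mp k s| ≤ 100*L := by
    have hrs : |r - s| ≤ Real.sqrt ρ := by
      rw [_root_.abs_of_nonneg (by linarith [hrS.1])]
      have := hrS.2
      rw [hsdef]; linarith
    have h1 : (7*(k:ℝ)/ρ) * |r - s| ≤ (7*(k:ℝ)/ρ) * Real.sqrt ρ := by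
      apply mul_le_mul_of_nonneg_left hrs (by positivity)
    have h2 : (7*(k:ℝ)/ρ) * Real.sqrt ρ ≤ 100*L := by
      rw [div_mul_eq_mul_div, div_le_iff₀ hρpos]
      have hk7 : (k:ℝ) ≤ 12*L*Real.sqrt ρ + 1 := by linarith [hkb.2]
      nlinarith
    linarith
  -- norm computation
  have hspos : (0:ℝ) < s := by rw [hsdef]; nlinarith
  have hrpos : (0:ℝ) < r := by linarith [(hmem r hrS).1]
  have hnorm : ‖((s:ℂ)) ^ (4 * k) * (mu lam Mm s / mu lam Mp s) *
      (r:ℂ) ^ (-(4 * k : ℤ)) * (mu lam Mp r / mu lam Mm r)‖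
      = Real.exp (Gfun lam Mm Mp k r - Gfun lam Mm Mp k s) := by
    have emu : ∀ (m : ℕ) (x : ℝ), ‖mu lam m x‖ = Real.exp ((muE lam m x).re) := by
      intro m x
      rw [mu_eq, Complex.norm_exp]
    have e1 : ‖((s:ℂ)) ^ (4*k)‖ = Real.exp ((4*(k:ℝ)) * Real.log s) := by
      rw [norm_pow, Complex.norm_real, Real.norm_eq_abs, _root_.abs_of_pos hspos]
      have h := Real.exp_nat_mul (Real.log s) (4*k)
      rw [Real.exp_log hspos] at h
      rw [← h]
      push_cast
      ring_nf
    have e2 : ‖((r:ℂ)) ^ (-(4*k:ℤ))‖ = Real.exp (-((4*(k:ℝ)) * Real.log r)) := by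
      rw [show (-(4*k:ℤ)) = -((4*k:ℕ):ℤ) by push_cast; ring]
      rw [norm_zpow, Complex.norm_real, Real.norm_eq_abs, _root_.abs_of_pos hrpos,
        zpow_neg, zpow_natCast]
      have h := Real.exp_nat_mul (Real.log r) (4*k)
      rw [Real.exp_log hrpos] at h
      rw [Real.exp_neg, ← h]
      push_cast
      ring_nf
    rw [norm_mul, norm_mul, norm_mul, norm_div, norm_div, e1, e2, emu, emu, emu, emu]
    rw [← Real.exp_sub, ← Real.exp_sub, ← Real.exp_add, ← Real.exp_add, ← Real.exp_add]
    congr 1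
    show 4*(k:ℝ) * Real.log s + ((muE lam Mm s).re - (muE lam Mp s).re)
        + -(4*(k:ℝ) * Real.log r) + ((muE lam Mp r).re - (muE lam Mm r).re)
      = ((muE lam Mp r).re - (muE lam Mm r).re - 4*(k:ℝ)*Real.log r)
        - ((muE lam Mp s).re - (muE lam Mm s).re - 4*(k:ℝ)*Real.log s)
    ring
  have hupper : Gfun lam Mm Mp k r - Gfun lam Mm Mp k s ≤ 0 := by
    have := hanti hsS hrS hrS.1
    linarith
  constructor
  · rw [hnorm]
    apply Real.exp_le_exp.mpr
    have := abs_le.mp hGbound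
    linarith [this.1]
  · rw [hnorm]
    calc Real.exp (Gfun lam Mm Mp k r - Gfun lam Mm Mp k s) ≤ Real.exp 0 :=
          Real.exp_le_exp.mpr hupper
      _ = 1 := Real.exp_zero
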